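/- Let a : X → ℝ with a(x) ≥ 1, d ≥ 1, μ ∈ ℕ, ℓ ∈ ℝ with ℓ ≠ 0, η ∈ ℂ, and let h_k : ℂ × X → ℂ (k ∈ ℕ) be functions. For s ∈ ℂ and x ∈ X let T(s,x,y) = y^{(ℓs+η)/d}(log y)^μ Σ_k h_k(s,x)(a(x)/y)^{k/d}, assuming the series has summable sup-norms in (x,y) for each fixed s. Then y ↦ T(s,x,y) is integrable on (a(x),∞) if and only if h_k(s,x) = 0 for every k ∈ ℕ with Re(ℓs + η) + d − k ≥ 0. -/

import Mathlib

open MeasureTheory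

/-- a prepared generator with summable sup-norms is integrable on
`(a(x),∞)` iff all the coefficients of the non-integrable terms vanish. -/
theorem stmt17 {X : Type*} (a : X → ℝ) (ha : ∀ x, 1 ≤ a x) (d : ℕ) (hd : 1 ≤ d) (μ : ℕ)
    (l : ℝ) (hl : l ≠ 0) (η : ℂ) (h : ℕ → ℂ → X → ℂ) (s : ℂ) (x : X)
    (C : ℕ → ℝ) (hC : Summable C) (hbound : ∀ k x', ‖h k s x'‖ ≤ C k) :
    IntegrableOn
      (fun y : ℝ => (y : ℂ) ^ (((l : ℂ) * s + η) / d) * ((Real.log y : ℂ)) ^ μ *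
        ∑' k : ℕ, h k s x * (((a x / y : ℝ)) : ℂ) ^ ((k : ℂ) / d)) (Set.Ioi (a x))
    ↔ ∀ k : ℕ, 0 ≤ ((l : ℂ) * s + η).re + d - k → h k s x = 0 := by
  classical
  have hA : 1 ≤ a x := ha x
  have hA0 : (0:ℝ) < a x := by linarith
  have hdR : (0:ℝ) < (d:ℝ) := by exact_mod_cast hd
  set A := a x with hAdef
  set r : ℝ := ((l:ℂ)*s+η).re with hrdef
  set f : ℕ → ℝ → ℂ := fun k y => h k s x * (((A / y : ℝ)) : ℂ) ^ ((k : ℂ) / d) with hfdef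
  set F : ℝ → ℂ := fun y : ℝ => (y : ℂ) ^ (((l : ℂ) * s + η) / d) * ((Real.log y : ℂ)) ^ μ *
        ∑' k : ℕ, f k y with hFdef
  have hC0 : ∀ k, 0 ≤ C k := fun k => le_trans (norm_nonneg _) (hbound k x)
  have hS0 : 0 ≤ ∑' k, C k := tsum_nonneg hC0
  set S : ℝ := ∑' k, C k with hSdef
  -- cast helpers
  have hkd : ∀ k : ℕ, ((k:ℂ)/(d:ℂ)) = ((((k:ℝ)/(d:ℝ) : ℝ)):ℂ) := by intro k; push_cast; ring
  have hcd : ((((l:ℂ)*s+η)/(d:ℂ))).re = r / d := by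
    rw [show ((d:ℂ)) = (((d:ℝ)):ℂ) by push_cast; rfl, Complex.div_ofReal_re]
  -- norm of a term
  have hfn : ∀ (k : ℕ) (y : ℝ), A ≤ y →
      ‖f k y‖ = ‖h k s x‖ * (A / y) ^ ((k:ℝ)/(d:ℝ)) := by
    intro k y hy
    have hy0 : 0 < y := lt_of_lt_of_le hA0 hy
    have h0 : 0 < A / y := div_pos hA0 hy0
    rw [hfdef]
    simp only [norm_mul, hkd k]
    congr 1
    rw [Complex.norm_cpow_eq_rpow_re_of_pos h0, Complex.ofReal_re]
  -- bound on the terms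
  have hfb : ∀ (k : ℕ) (y : ℝ), A ≤ y → ‖f k y‖ ≤ C k := by
    intro k y hy
    rw [hfn k y hy]
    have hy0 : 0 < y := lt_of_lt_of_le hA0 hy
    have h0 : 0 < A / y := div_pos hA0 hy0
    have h1 : A / y ≤ 1 := (div_le_one hy0).2 hy
    calc ‖h k s x‖ * (A / y) ^ ((k:ℝ)/(d:ℝ)) ≤ C k * 1 := by
          apply mul_le_mul (hbound k x) (Real.rpow_le_one h0.le h1 (by positivity))
            (by positivity) (hC0 k)
      _ = C k := mul_one _
  have hsum : ∀ y : ℝ, A ≤ y → Summable (fun k => f k y) := by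
    intro y hy
    exact Summable.of_norm_bounded hC (fun k => hfb k y hy)
  -- norm of F
  have hFn : ∀ y : ℝ, A ≤ y →
      ‖F y‖ = y ^ (r/(d:ℝ)) * (Real.log y) ^ μ * ‖∑' k, f k y‖ := by
    intro y hy
    have hy0 : 0 < y := lt_of_lt_of_le hA0 hy
    have hly : 0 ≤ Real.log y := Real.log_nonneg (le_trans hA hy)
    rw [hFdef]
    simp only [norm_mul, norm_pow, Complex.norm_real, Real.norm_eq_abs,
      abs_of_nonneg hly]
    rw [Complex.norm_cpow_eq_rpow_re_of_pos hy0, hcd]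
  -- continuity of F on Ici A
  have hcont : ContinuousOn F (Set.Ici A) := by
    have h1 : ContinuousOn (fun y : ℝ => (y:ℂ) ^ (((l:ℂ)*s+η)/(d:ℂ))) (Set.Ici A) := by
      intro y hy
      exact (Complex.continuousAt_ofReal_cpow_const y _
        (Or.inr (ne_of_gt (lt_of_lt_of_le hA0 hy)))).continuousWithinAt
    have h2 : ContinuousOn (fun y : ℝ => ((Real.log y : ℂ)) ^ μ) (Set.Ici A) := by
      apply ContinuousOn.pow
      apply Complex.continuous_ofReal.comp_continuousOn
      exact Real.continuousOn_log.mono (fun y hy => ne_of_gt (lt_of_lt_of_le hA0 hy))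
    have h3 : ContinuousOn (fun y : ℝ => ∑' k, f k y) (Set.Ici A) := by
      apply continuousOn_tsum (u := C) ?_ hC (fun k y hy => hfb k y hy)
      intro k
      apply ContinuousOn.mul continuousOn_const
      intro y hy
      have hy0 : 0 < y := lt_of_lt_of_le hA0 hy
      have : ContinuousAt (fun t : ℝ => ((t:ℂ)) ^ ((k:ℂ)/(d:ℂ))) (A / y) :=
        Complex.continuousAt_ofReal_cpow_const _ _ (Or.inr (ne_of_gt (div_pos hA0 hy0)))
      exact (this.comp ((continuousAt_const.div continuousAt_id (ne_of_gt hy0)))).continuousWithinAt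
    exact (h1.mul h2).mul h3
  have hmeas : AEStronglyMeasurable F (volume.restrict (Set.Ioi A)) :=
    (hcont.mono Set.Ioi_subset_Ici_self).aestronglyMeasurable measurableSet_Ioi
  constructor
  · intro hint k hk
    by_contra hne
    have hex : ∃ j, h j s x ≠ 0 := ⟨k, hne⟩
    set k1 := Nat.find hex with hk1def
    have hk1 : h k1 s x ≠ 0 := Nat.find_spec hex
    have hk1le : k1 ≤ k := Nat.find_min' hex hne
    have hk1van : ∀ j < k1, h j s x = 0 := fun j hj => not_not.1 (Nat.find_min hex hj)
    have hh0 : 0 < ‖h k1 s x‖ := norm_pos_iff.2 hk1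
    have hrk1 : 0 ≤ r + d - k1 := by
      have h1 : (k1:ℝ) ≤ (k:ℝ) := by exact_mod_cast hk1le
      linarith [hk]
    set m : ℝ := min 1 (‖h k1 s x‖ / (2*(S+1))) with hmdef
    have hm0 : 0 < m := lt_min one_pos (by positivity)
    have hm1 : m ≤ 1 := min_le_left _ _
    set t0 : ℝ := m ^ (d:ℝ) with ht0def
    have ht00 : 0 < t0 := Real.rpow_pos_of_pos hm0 _
    set Y0 : ℝ := max (max A (Real.exp 1)) (A / t0) with hY0def
    have hY0A : A ≤ Y0 := le_trans (le_max_left _ _) (le_max_left _ _)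
    have hY0e : Real.exp 1 ≤ Y0 := le_trans (le_max_right _ _) (le_max_left _ _)
    have hY0t : A / t0 ≤ Y0 := le_max_right _ _
    have hY00 : 0 < Y0 := lt_of_lt_of_le hA0 hY0A
    set c0 : ℝ := (‖h k1 s x‖ / 2) * A ^ ((k1:ℝ)/(d:ℝ)) with hc0def
    have hc00 : 0 < c0 := by positivity
    -- key lower bound
    have hlow : ∀ y ∈ Set.Ioi Y0, c0 * y ^ (-1:ℝ) ≤ ‖F y‖ := by
      intro y hy
      rw [Set.mem_Ioi] at hy
      have hyA : A ≤ y := le_trans hY0A hy.le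
      have hy0 : 0 < y := lt_of_lt_of_le hA0 hyA
      have hy1 : 1 ≤ y := le_trans hA hyA
      set t : ℝ := A / y with htdef
      have ht0 : 0 < t := div_pos hA0 hy0
      have ht1 : t ≤ 1 := (div_le_one hy0).2 hyA
      have htle : t ≤ t0 := by
        rw [htdef, div_le_iff₀ hy0]
        have h1 : A / t0 ≤ y := le_trans hY0t hy.le
        rw [div_le_iff₀ ht00] at h1
        linarith [h1, mul_comm y t0]
      have ht1d : t ^ ((1:ℝ)/(d:ℝ)) ≤ m := by
        calc t ^ ((1:ℝ)/(d:ℝ)) ≤ t0 ^ ((1:ℝ)/(d:ℝ)) :=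
              Real.rpow_le_rpow ht0.le htle (by positivity)
          _ = m ^ ((d:ℝ) * ((1:ℝ)/(d:ℝ))) := by rw [ht0def, ← Real.rpow_mul hm0.le]
          _ = m := by rw [mul_one_div, div_self (ne_of_gt hdR), Real.rpow_one]
      have hsumy := hsum y hyA
      have hsplit : ∑' j, f j y = f k1 y + ∑' i, f (i + (k1+1)) y := by
        rw [← Summable.sum_add_tsum_nat_add (k1+1) hsumy]
        congr 1
        rw [Finset.sum_range_succ, Finset.sum_eq_zero, zero_add]
        intro j hj
        simp [hfdef, hk1van j (Finset.mem_range.1 hj)]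
      have hCtail : Summable (fun i => C (i + (k1+1))) := (summable_nat_add_iff (k1+1)).2 hC
      have hCtail_le : ∑' i, C (i + (k1+1)) ≤ S := by
        have hsp := Summable.sum_add_tsum_nat_add (k1+1) hC
        have hnn : 0 ≤ ∑ i ∈ Finset.range (k1+1), C i :=
          Finset.sum_nonneg (fun i _ => hC0 i)
        rw [hSdef]
        linarith [hsp]
      have htail : ‖∑' i, f (i + (k1+1)) y‖ ≤ S * t ^ ((((k1:ℝ)+1))/(d:ℝ)) := by
        have hb : ∀ i, ‖f (i + (k1+1)) y‖ ≤ C (i + (k1+1)) * t ^ ((((k1:ℝ)+1))/(d:ℝ)) := by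
          intro i
          rw [hfn _ y hyA]
          apply mul_le_mul (hbound _ x) ?_ (by positivity) (hC0 _)
          apply Real.rpow_le_rpow_of_exponent_ge ht0 ht1
          gcongr ?_ / (d:ℝ)
          push_cast; linarith
        calc ‖∑' i, f (i + (k1+1)) y‖ ≤ ∑' i, (C (i + (k1+1)) * t ^ ((((k1:ℝ)+1))/(d:ℝ))) :=
              tsum_of_norm_bounded (Summable.hasSum (hCtail.mul_right _)) hb
          _ = (∑' i, C (i + (k1+1))) * t ^ ((((k1:ℝ)+1))/(d:ℝ)) := tsum_mul_right
          _ ≤ S * t ^ ((((k1:ℝ)+1))/(d:ℝ)) := by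
              apply mul_le_mul_of_nonneg_right hCtail_le (by positivity)
      have hsplitexp : t ^ ((((k1:ℝ)+1))/(d:ℝ)) = t ^ ((k1:ℝ)/(d:ℝ)) * t ^ ((1:ℝ)/(d:ℝ)) := by
        rw [← Real.rpow_add ht0]; ring_nf
      have hbr : ‖h k1 s x‖ / 2 * t ^ ((k1:ℝ)/(d:ℝ)) ≤ ‖∑' j, f j y‖ := by
        have h1 : ‖f k1 y‖ - ‖∑' i, f (i + (k1+1)) y‖ ≤ ‖∑' j, f j y‖ := by
          rw [hsplit]
          have h0 := norm_sub_le (f k1 y + ∑' i, f (i + (k1+1)) y) (∑' i, f (i + (k1+1)) y)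
          simp only [add_sub_cancel_right] at h0
          linarith
        have h2 : S * t ^ ((((k1:ℝ)+1))/(d:ℝ)) ≤ (‖h k1 s x‖/2) * t ^ ((k1:ℝ)/(d:ℝ)) := by
          rw [hsplitexp, ← mul_assoc, mul_comm S (t ^ ((k1:ℝ)/(d:ℝ))), mul_assoc, mul_comm]
          apply mul_le_mul_of_nonneg_right ?_ (by positivity)
          calc S * t ^ ((1:ℝ)/(d:ℝ)) ≤ S * (‖h k1 s x‖ / (2*(S+1))) := by
                apply mul_le_mul_of_nonneg_left (le_trans ht1d (min_le_right _ _)) hS0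
            _ ≤ ‖h k1 s x‖ / 2 := by
                rw [mul_comm, div_mul_eq_mul_div, div_le_div_iff₀ (by positivity) two_pos]
                nlinarith [hh0, hS0]
        rw [hfn _ y hyA] at h1
        linarith [h1, htail]
      -- now assemble
      rw [hFn y hyA]
      have hlog1 : 1 ≤ Real.log y := by
        rw [Real.le_log_iff_exp_le hy0]
        exact le_trans hY0e hy.le
      have hlogp : 1 ≤ (Real.log y) ^ μ := by
        calc (1:ℝ) = 1 ^ μ := (one_pow μ).symm
          _ ≤ (Real.log y) ^ μ := pow_le_pow_left₀ zero_le_one hlog1 μ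
      have hyr : y ^ ((-1:ℝ)) ≤ y ^ ((r - k1)/(d:ℝ)) := by
        apply Real.rpow_le_rpow_of_exponent_le hy1
        rw [le_div_iff₀ hdR]
        linarith
      have htA : t ^ ((k1:ℝ)/(d:ℝ)) = A ^ ((k1:ℝ)/(d:ℝ)) * y ^ (-((k1:ℝ)/(d:ℝ))) := by
        rw [htdef, Real.div_rpow hA0.le hy0.le, Real.rpow_neg hy0.le, div_eq_mul_inv]
      calc c0 * y ^ (-1:ℝ)
          ≤ c0 * y ^ ((r - k1)/(d:ℝ)) := by
            apply mul_le_mul_of_nonneg_left hyr hc00.le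
        _ = y ^ (r/(d:ℝ)) * (‖h k1 s x‖/2 * t ^ ((k1:ℝ)/(d:ℝ))) := by
            rw [htA, hc0def]
            rw [show (r - (k1:ℝ))/(d:ℝ) = r/(d:ℝ) + (-((k1:ℝ)/(d:ℝ))) by ring,
              Real.rpow_add hy0]
            ring
        _ ≤ y ^ (r/(d:ℝ)) * ‖∑' j, f j y‖ :=
            mul_le_mul_of_nonneg_left hbr (Real.rpow_nonneg hy0.le _)
        _ ≤ y ^ (r/(d:ℝ)) * (Real.log y) ^ μ * ‖∑' j, f j y‖ := by
            rw [mul_assoc]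
            apply mul_le_mul_of_nonneg_left ?_ (Real.rpow_nonneg hy0.le _)
            calc ‖∑' j, f j y‖ = 1 * ‖∑' j, f j y‖ := (one_mul _).symm
              _ ≤ (Real.log y)^μ * ‖∑' j, f j y‖ :=
                  mul_le_mul_of_nonneg_right hlogp (norm_nonneg _)
    -- contradiction
    have hint' : IntegrableOn F (Set.Ioi Y0) := hint.mono_set (Set.Ioi_subset_Ioi hY0A)
    have hgm : AEStronglyMeasurable (fun y : ℝ => c0 * y ^ (-1:ℝ))
        (volume.restrict (Set.Ioi Y0)) := by
      apply ContinuousOn.aestronglyMeasurable ?_ measurableSet_Ioi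
      intro y hy
      have hy0 : (0:ℝ) < y := lt_trans hY00 (Set.mem_Ioi.1 hy)
      exact (continuousAt_const.mul
        (Real.continuousAt_rpow_const y _ (Or.inl (ne_of_gt hy0)))).continuousWithinAt
    have hgi : IntegrableOn (fun y : ℝ => c0 * y ^ (-1:ℝ)) (Set.Ioi Y0) := by
      apply Integrable.mono' hint'.norm hgm
      rw [ae_restrict_iff' measurableSet_Ioi]
      apply Filter.Eventually.of_forall
      intro y hy
      have hy0 : (0:ℝ) < y := lt_trans hY00 (Set.mem_Ioi.1 hy)
      rw [Real.norm_eq_abs, abs_of_nonneg (by positivity)]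
      exact hlow y hy
    have hri : IntegrableOn (fun y : ℝ => y ^ (-1:ℝ)) (Set.Ioi Y0) := by
      have h2 := hgi.const_mul c0⁻¹
      have : (fun y : ℝ => c0⁻¹ * (c0 * y ^ (-1:ℝ))) = fun y : ℝ => y ^ (-1:ℝ) := by
        funext y; rw [← mul_assoc, inv_mul_cancel₀ (ne_of_gt hc00), one_mul]
      rwa [this] at h2
    rw [integrableOn_Ioi_rpow_iff hY00] at hri
    linarith
  · intro hvan
    have hex : ∃ k : ℕ, r + (d:ℝ) - k < 0 := by
      refine ⟨⌊max 0 (r + (d:ℝ))⌋₊ + 1, ?_⟩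
      have h1 : max 0 (r + (d:ℝ)) < ⌊max 0 (r + (d:ℝ))⌋₊ + 1 := Nat.lt_floor_add_one _
      have h2 : r + (d:ℝ) ≤ max 0 (r + (d:ℝ)) := le_max_right _ _
      push_cast
      linarith
    set k0 := Nat.find hex with hk0def
    have hk0 : r + (d:ℝ) - k0 < 0 := Nat.find_spec hex
    have hk0min : ∀ j : ℕ, h j s x ≠ 0 → k0 ≤ j := by
      intro j hj
      apply Nat.find_min' hex
      by_contra hcon
      exact hj (hvan j (le_of_not_gt hcon))
    set β : ℝ := (r - k0)/(d:ℝ) with hβdef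
    have hβ : β < -1 := by
      rw [hβdef, div_lt_iff₀ hdR]
      linarith
    set β' : ℝ := (β - 1)/2 with hβ'def
    have hβ'1 : β' < -1 := by rw [hβ'def]; linarith
    have hexp : 0 < β' - β := by rw [hβ'def]; linarith
    -- uniform bound on the tsum
    have htsb : ∀ y : ℝ, A ≤ y → ‖∑' j, f j y‖ ≤ S * (A/y) ^ ((k0:ℝ)/(d:ℝ)) := by
      intro y hy
      have hy0 : 0 < y := lt_of_lt_of_le hA0 hy
      have ht0 : 0 < A / y := div_pos hA0 hy0
      have ht1 : A / y ≤ 1 := (div_le_one hy0).2 hy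
      have hb : ∀ j, ‖f j y‖ ≤ C j * (A/y) ^ ((k0:ℝ)/(d:ℝ)) := by
        intro j
        by_cases hj : h j s x = 0
        · rw [hfdef]
          simp only [hj, zero_mul, norm_zero]
          exact mul_nonneg (hC0 j) (Real.rpow_nonneg ht0.le _)
        · rw [hfn j y hy]
          apply mul_le_mul (hbound j x) ?_ (by positivity) (hC0 j)
          apply Real.rpow_le_rpow_of_exponent_ge ht0 ht1
          gcongr ?_ / (d:ℝ)
          exact_mod_cast hk0min j hj
      calc ‖∑' j, f j y‖ ≤ ∑' j, (C j * (A/y) ^ ((k0:ℝ)/(d:ℝ))) :=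
            tsum_of_norm_bounded (Summable.hasSum (hC.mul_right _)) hb
        _ = S * (A/y) ^ ((k0:ℝ)/(d:ℝ)) := tsum_mul_right
    have hFb : ∀ y : ℝ, A ≤ y →
        ‖F y‖ ≤ S * A ^ ((k0:ℝ)/(d:ℝ)) * (y ^ β * (Real.log y) ^ μ) := by
      intro y hy
      have hy0 : 0 < y := lt_of_lt_of_le hA0 hy
      have hly : 0 ≤ Real.log y := Real.log_nonneg (le_trans hA hy)
      rw [hFn y hy]
      have htA : (A/y) ^ ((k0:ℝ)/(d:ℝ)) = A ^ ((k0:ℝ)/(d:ℝ)) * y ^ (-((k0:ℝ)/(d:ℝ))) := by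
        rw [Real.div_rpow hA0.le hy0.le, Real.rpow_neg hy0.le, div_eq_mul_inv]
      calc y ^ (r/(d:ℝ)) * (Real.log y) ^ μ * ‖∑' j, f j y‖
          ≤ y ^ (r/(d:ℝ)) * (Real.log y) ^ μ * (S * (A/y) ^ ((k0:ℝ)/(d:ℝ))) := by
            apply mul_le_mul_of_nonneg_left (htsb y hy) (by positivity)
        _ = S * A ^ ((k0:ℝ)/(d:ℝ)) * (y ^ β * (Real.log y) ^ μ) := by
            rw [htA, hβdef, show (r - (k0:ℝ))/(d:ℝ) = r/(d:ℝ) + (-((k0:ℝ)/(d:ℝ))) by ring,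
              Real.rpow_add hy0]
            ring
    -- eventual comparison with y ^ β'
    have hlo := (isLittleO_log_rpow_rpow_atTop (μ:ℝ) hexp).def one_pos
    rw [Filter.eventually_atTop] at hlo
    obtain ⟨Y1, hY1⟩ := hlo
    set Y2 : ℝ := max A Y1 with hY2def
    have hY2A : A ≤ Y2 := le_max_left _ _
    have hY20 : 0 < Y2 := lt_of_lt_of_le hA0 hY2A
    have hFb' : ∀ y : ℝ, y ∈ Set.Ioi Y2 →
        ‖F y‖ ≤ (S * A ^ ((k0:ℝ)/(d:ℝ))) * y ^ β' := by
      intro y hy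
      rw [Set.mem_Ioi] at hy
      have hyA : A ≤ y := le_trans hY2A hy.le
      have hy0 : 0 < y := lt_of_lt_of_le hA0 hyA
      have hlog : (Real.log y) ^ μ ≤ y ^ (β' - β) := by
        have := hY1 y (le_trans (le_max_right A Y1) hy.le)
        rw [Real.norm_eq_abs, Real.norm_eq_abs, one_mul, Real.rpow_natCast,
          abs_of_nonneg (Real.rpow_nonneg hy0.le _)] at this
        exact le_trans (le_abs_self _) this
      calc ‖F y‖ ≤ S * A ^ ((k0:ℝ)/(d:ℝ)) * (y ^ β * (Real.log y) ^ μ) := hFb y hyA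
        _ ≤ S * A ^ ((k0:ℝ)/(d:ℝ)) * (y ^ β * y ^ (β' - β)) := by
            apply mul_le_mul_of_nonneg_left ?_ (by positivity)
            exact mul_le_mul_of_nonneg_left hlog (Real.rpow_nonneg hy0.le _)
        _ = (S * A ^ ((k0:ℝ)/(d:ℝ))) * y ^ β' := by
            rw [← Real.rpow_add hy0]
            ring_nf
    -- integrability on the tail
    have hFtail : IntegrableOn F (Set.Ioi Y2) := by
      apply Integrable.mono' ((integrableOn_Ioi_rpow_of_lt hβ'1 hY20).const_mul
        (S * A ^ ((k0:ℝ)/(d:ℝ))))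
      · exact (hcont.mono (le_trans (Set.Ioi_subset_Ioi hY2A) Set.Ioi_subset_Ici_self
          : Set.Ioi Y2 ⊆ Set.Ici A)).aestronglyMeasurable measurableSet_Ioi
      · rw [ae_restrict_iff' measurableSet_Ioi]
        exact Filter.Eventually.of_forall hFb'
    -- integrability on the bounded part
    have hFmid : IntegrableOn F (Set.Ioc A Y2) := by
      apply IntegrableOn.mono_set ?_ Set.Ioc_subset_Icc_self
      exact (hcont.mono Set.Icc_subset_Ici_self).integrableOn_Icc
    have := hFmid.union hFtail
    rwa [Set.Ioc_union_Ioi_eq_Ioi hY2A] at this
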